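/- arXiv:1806.08328 — 2 statements merged into one kernel-verified Lean document; each statement's English description precedes it below -/
import Mathlib

section
/- Let α, β be cardinals with 2 ≤ α, β ≤ ℵ₀ and let P be a poset. Then P is (α,β)-representable if and only if for all finite cardinals r, s with 2 ≤ r ≤ α and 2 ≤ s ≤ β, all n ∈ ℕ, and all p, q ∈ P with p ≰ q, Win^{r,s}_n({p}, q) holds. -/
open Cardinal

universe u

/-- A poset `P` is `(α,β)`-representable if there is a set `X` and a map `h : P → Set X`
which is an order-embedding, sends existing infima of sets of cardinality `< α` to
intersections, and existing suprema of sets of cardinality `< β` to unions. -/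
def IsABRepresentable (α β : Cardinal.{u}) (P : Type u) [PartialOrder P] : Prop :=
  ∃ (X : Type u) (h : P → Set X),
    (∀ p q : P, p ≤ q ↔ h p ⊆ h q) ∧
    (∀ (S : Set P) (m : P), #S < α → IsGLB S m → h m = ⋂ s ∈ S, h s) ∧
    (∀ (T : Set P) (j : P), #T < β → IsLUB T j → h j = ⋃ t ∈ T, h t)

/-- `Win α β n U q` : player ∃ has an `n`-strategy in the `(α,β)`-game with
starting position `(U, {q})`. -/
def Win (α β : Cardinal.{u}) {P : Type u} [PartialOrder P] : ℕ → Set P → P → Prop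
  | 0, U, q => q ∉ U
  | n + 1, U, q => q ∉ U ∧
      (∀ a ∈ U, ∀ b, a ≤ b → Win α β n (insert b U) q) ∧
      (∀ A : Set P, A ⊆ U → #A < α → ∀ m, IsGLB A m → Win α β n (insert m U) q) ∧
      (∀ B : Set P, #B < β → ∀ j, IsLUB B j → j ∈ U → ∃ b ∈ B, Win α β n (insert b U) q)

section AuxWin

variable {P : Type u} [PartialOrder P]

lemma win_succ {r s : Cardinal.{u}} {n : ℕ} {U : Set P} {q : P} :
    Win r s (n+1) U q ↔ q ∉ U ∧
      (∀ a ∈ U, ∀ b, a ≤ b → Win r s n (insert b U) q) ∧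
      (∀ A : Set P, A ⊆ U → #A < r → ∀ m, IsGLB A m → Win r s n (insert m U) q) ∧
      (∀ B : Set P, #B < s → ∀ j, IsLUB B j → j ∈ U → ∃ b ∈ B, Win r s n (insert b U) q) :=
  Iff.rfl

lemma win_mono {r s r' s' : Cardinal.{u}} (hr : r' ≤ r) (hs : s' ≤ s) :
    ∀ {n : ℕ} {U : Set P} {q : P}, Win r s n U q → Win r' s' n U q := by
  intro n
  induction n with
  | zero => exact fun h => h
  | succ n ih =>
    rintro U q ⟨hq, h1, h2, h3⟩
    refine ⟨hq, fun a ha b hab => ih (h1 a ha b hab),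
      fun A hAU hA m hm => ih (h2 A hAU (hA.trans_le hr) m hm),
      fun B hB j hj hjU => ?_⟩
    obtain ⟨b, hbB, hw⟩ := h3 B (hB.trans_le hs) j hj hjU
    exact ⟨b, hbB, ih hw⟩

lemma win_anti {r s : Cardinal.{u}} :
    ∀ {n : ℕ} {U U' : Set P} {q : P}, U' ⊆ U → Win r s n U q → Win r s n U' q := by
  intro n
  induction n with
  | zero => exact fun hsub h hq => h (hsub hq)
  | succ n ih =>
    rintro U U' q hsub ⟨hq, h1, h2, h3⟩
    refine ⟨fun h => hq (hsub h),
      fun a ha b hab => ih (Set.insert_subset_insert hsub) (h1 a (hsub ha) b hab),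
      fun A hAU hA m hm => ih (Set.insert_subset_insert hsub) (h2 A (hAU.trans hsub) hA m hm),
      fun B hB j hj hjU => ?_⟩
    obtain ⟨b, hbB, hw⟩ := h3 B hB j hj (hsub hjU)
    exact ⟨b, hbB, ih (Set.insert_subset_insert hsub) hw⟩

lemma win_step {r s : Cardinal.{u}} :
    ∀ {n : ℕ} {U : Set P} {q : P}, Win r s (n+1) U q → Win r s n U q := by
  intro n
  induction n with
  | zero => exact fun h => h.1
  | succ n ih =>
    rintro U q ⟨hq, h1, h2, h3⟩
    refine ⟨hq, fun a ha b hab => ih (h1 a ha b hab),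
      fun A hAU hA m hm => ih (h2 A hAU hA m hm),
      fun B hB j hj hjU => ?_⟩
    obtain ⟨b, hbB, hw⟩ := h3 B hB j hj hjU
    exact ⟨b, hbB, ih hw⟩

lemma win_le {r s : Cardinal.{u}} {n m : ℕ} (h : n ≤ m) {U : Set P} {q : P} :
    Win r s m U q → Win r s n U q := by
  induction m with
  | zero => obtain rfl := Nat.le_zero.1 h; exact id
  | succ m ih =>
    rcases Nat.lt_or_ge n (m+1) with hlt | hge
    · exact fun hw => ih (Nat.lt_succ_iff.1 hlt) (win_step hw)
    · obtain rfl : n = m + 1 := le_antisymm h hge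
      exact id

lemma sUnion_eq_of_cofinal {C D : Set (Set P)} (hC : IsChain (· ⊆ ·) C) (hD : D ⊆ C)
    {U₀ : Set P} (hU₀ : U₀ ∈ D) (hcl : ∀ V ∈ C, U₀ ⊆ V → V ∈ D) : ⋃₀ D = ⋃₀ C := by
  refine Set.Subset.antisymm (Set.sUnion_mono hD) ?_
  rintro x ⟨V, hVC, hxV⟩
  rcases hC.total hVC (hD hU₀) with h | h
  · exact ⟨U₀, hU₀, h hxV⟩
  · exact ⟨V, hcl V hVC h, hxV⟩

lemma sUnion_insert_image {D : Set (Set P)} (hD : D.Nonempty) (x : P) :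
    ⋃₀ ((insert x ·) '' D) = insert x (⋃₀ D) := by
  ext y
  simp only [Set.sUnion_image, Set.mem_iUnion, Set.mem_insert_iff, Set.mem_sUnion,
    exists_prop]
  constructor
  · rintro ⟨U, hU, h | h⟩
    · exact Or.inl h
    · exact Or.inr ⟨U, hU, h⟩
  · rintro (h | ⟨U, hU, h⟩)
    · exact hD.imp fun U hU => ⟨hU, Or.inl h⟩
    · exact ⟨U, hU, Or.inr h⟩

lemma exists_mem_of_finite_subset {C : Set (Set P)} (hC : IsChain (· ⊆ ·) C)
    (hne : C.Nonempty) {A : Set P} (hA : A.Finite) (hsub : A ⊆ ⋃₀ C) :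
    ∃ U ∈ C, A ⊆ U := by
  have hd : DirectedOn (fun i j : Set P => id i ⊆ id j) C := hC.directedOn
  have hs : (hA.toFinset : Set P) ⊆ ⋃ i ∈ C, id i := by
    rw [hA.coe_toFinset]
    simpa only [id, ← Set.sUnion_eq_biUnion] using hsub
  obtain ⟨U, hU, hAU⟩ := DirectedOn.exists_mem_subset_of_finset_subset_biUnion hne hd hs
  rw [hA.coe_toFinset] at hAU
  exact ⟨U, hU, hAU⟩

lemma win_chain {r s : Cardinal.{u}} (hr : r ≤ ℵ₀) (hs : s < ℵ₀) :
    ∀ {n : ℕ} {C : Set (Set P)} {q : P}, C.Nonempty → IsChain (· ⊆ ·) C →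
      (∀ U ∈ C, Win r s n U q) → Win r s n (⋃₀ C) q := by
  intro n
  induction n with
  | zero =>
    rintro C q hne hch hall ⟨U, hU, hqU⟩
    exact hall U hU hqU
  | succ n ih =>
    intro C q hne hch hall
    have hq : q ∉ ⋃₀ C := by rintro ⟨U, hU, hqU⟩; exact (hall U hU).1 hqU
    refine ⟨hq, ?_, ?_, ?_⟩
    · -- up moves
      rintro a ⟨U₀, hU₀, haU₀⟩ b hab
      set D := {U ∈ C | a ∈ U} with hDdef
      have hDC : D ⊆ C := fun _ h => h.1
      have hU₀D : U₀ ∈ D := ⟨hU₀, haU₀⟩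
      have hDne : D.Nonempty := ⟨U₀, hU₀D⟩
      have hDU : ⋃₀ D = ⋃₀ C :=
        sUnion_eq_of_cofinal hch hDC hU₀D (fun V hV hUV => ⟨hV, hUV haU₀⟩)
      have hkey := ih (hDne.image (insert b ·))
        (IsChain.image_of_map_rel _ _ _ (fun _ _ h => Set.insert_subset_insert h) (hch.mono hDC))
        (by rintro V ⟨U, hU, rfl⟩; exact (hall U hU.1).2.1 a hU.2 b hab)
      rwa [sUnion_insert_image hDne, hDU] at hkey
    · -- inf moves
      intro A hAU hA m hm
      have hAfin : A.Finite := lt_aleph0_iff_set_finite.1 (hA.trans_le hr)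
      obtain ⟨U₀, hU₀, hAU₀⟩ := exists_mem_of_finite_subset hch hne hAfin hAU
      set D := {U ∈ C | A ⊆ U} with hDdef
      have hDC : D ⊆ C := fun _ h => h.1
      have hU₀D : U₀ ∈ D := ⟨hU₀, hAU₀⟩
      have hDne : D.Nonempty := ⟨U₀, hU₀D⟩
      have hDU : ⋃₀ D = ⋃₀ C :=
        sUnion_eq_of_cofinal hch hDC hU₀D (fun V hV hUV => ⟨hV, hAU₀.trans hUV⟩)
      have hkey := ih (hDne.image (insert m ·))
        (IsChain.image_of_map_rel _ _ _ (fun _ _ h => Set.insert_subset_insert h) (hch.mono hDC))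
        (by rintro V ⟨U, hU, rfl⟩; exact (hall U hU.1).2.2.1 A hU.2 hA m hm)
      rwa [sUnion_insert_image hDne, hDU] at hkey
    · -- sup moves
      rintro B hB j hj ⟨U₀, hU₀, hjU₀⟩
      set D := {U ∈ C | j ∈ U} with hDdef
      have hDC : D ⊆ C := fun _ h => h.1
      have hU₀D : U₀ ∈ D := ⟨hU₀, hjU₀⟩
      have hDne : D.Nonempty := ⟨U₀, hU₀D⟩
      have hDU : ⋃₀ D = ⋃₀ C :=
        sUnion_eq_of_cofinal hch hDC hU₀D (fun V hV hUV => ⟨hV, hUV hjU₀⟩)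
      have hBfin : B.Finite := lt_aleph0_iff_set_finite.1 (hB.trans hs)
      have hwit : ∀ U ∈ D, ∃ b ∈ B, Win r s n (insert b U) q :=
        fun U hU => (hall U hU.1).2.2.2 B hB j hj hU.2
      have hone : ∃ b ∈ B, ∀ U ∈ D, Win r s n (insert b U) q := by
        by_contra hcon
        push_neg at hcon
        have hBne : B.Nonempty := by
          obtain ⟨b, hb, -⟩ := hwit U₀ hU₀D; exact ⟨b, hb⟩
        haveI : Nonempty ↥B := hBne.to_subtype
        haveI : Finite ↥B := hBfin.to_subtype
        choose g hg1 hg2 using fun b : ↥B => hcon b b.2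
        obtain ⟨V, ⟨b₀, rfl⟩, hVmax⟩ :=
          (Set.finite_range g).exists_maximalFor id _ (Set.range_nonempty g)
        obtain ⟨b, hbB, hw⟩ := hwit (g b₀) (hg1 b₀)
        rcases hch.total (hDC (hg1 ⟨b, hbB⟩)) (hDC (hg1 b₀)) with hle | hle
        · exact hg2 ⟨b, hbB⟩ (win_anti (Set.insert_subset_insert hle) hw)
        · have heq : g b₀ = g ⟨b, hbB⟩ := le_antisymm hle (hVmax (Set.mem_range_self (⟨b, hbB⟩ : ↥B)) hle)
          exact hg2 ⟨b, hbB⟩ (heq ▸ hw)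
      obtain ⟨b, hbB, hwb⟩ := hone
      refine ⟨b, hbB, ?_⟩
      have hkey := ih (hDne.image (insert b ·))
        (IsChain.image_of_map_rel _ _ _ (fun _ _ h => Set.insert_subset_insert h) (hch.mono hDC))
        (by rintro V ⟨U, hU, rfl⟩; exact hwb U hU)
      rwa [sUnion_insert_image hDne, hDU] at hkey

/-- Forward direction: a separating point gives a winning strategy. -/
lemma win_of_separating {X : Type u} {h : P → Set X}
    (hord : ∀ p q : P, p ≤ q ↔ h p ⊆ h q)
    {α β r s : Cardinal.{u}}
    (hinf : ∀ (S : Set P) (m : P), #S < α → IsGLB S m → h m = ⋂ t ∈ S, h t)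
    (hsup : ∀ (T : Set P) (j : P), #T < β → IsLUB T j → h j = ⋃ t ∈ T, h t)
    (hrα : r ≤ α) (hsβ : s ≤ β) :
    ∀ (n : ℕ) (U : Set P) (q : P) (x : X),
      (∀ u ∈ U, x ∈ h u) → x ∉ h q → Win r s n U q := by
  intro n
  induction n with
  | zero => exact fun U q x hx hxq hqU => hxq (hx q hqU)
  | succ n ih =>
    intro U q x hx hxq
    refine ⟨fun hqU => hxq (hx q hqU), ?_, ?_, ?_⟩
    · intro a ha b hab
      refine ih _ _ x (fun u hu => ?_) hxq
      rcases Set.mem_insert_iff.1 hu with rfl | hu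
      · exact (hord a u).1 hab (hx a ha)
      · exact hx u hu
    · intro A hAU hA m hm
      refine ih _ _ x (fun u hu => ?_) hxq
      rcases Set.mem_insert_iff.1 hu with rfl | hu
      · rw [hinf A u (hA.trans_le hrα) hm]
        exact Set.mem_iInter₂.2 fun t ht => hx t (hAU ht)
      · exact hx u hu
    · intro B hB j hj hjU
      have hxj : x ∈ h j := hx j hjU
      rw [hsup B j (hB.trans_le hsβ) hj] at hxj
      obtain ⟨b, hbB, hxb⟩ := Set.mem_iUnion₂.1 hxj
      refine ⟨b, hbB, ih _ _ x (fun u hu => ?_) hxq⟩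
      rcases Set.mem_insert_iff.1 hu with rfl | hu
      · exact hxb
      · exact hx u hu

/-- `WinAll α β q U` : ∃ wins every finite-length game with valid finite parameters. -/
def WinAll (α β : Cardinal.{u}) (q : P) (U : Set P) : Prop :=
  ∀ r s : Cardinal.{u}, r < ℵ₀ → s < ℵ₀ → 2 ≤ r → r ≤ α → 2 ≤ s → s ≤ β →
    ∀ n : ℕ, Win r s n U q

lemma exists_good (α β : Cardinal.{u})
    (hα2 : 2 ≤ α) (hαω : α ≤ ℵ₀) (hβ2 : 2 ≤ β) (hβω : β ≤ ℵ₀)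
    (H : ∀ r s : Cardinal.{u}, r < ℵ₀ → s < ℵ₀ → 2 ≤ r → r ≤ α → 2 ≤ s → s ≤ β →
        ∀ n : ℕ, ∀ p q : P, ¬p ≤ q → Win r s n {p} q)
    {p q : P} (hpq : ¬p ≤ q) :
    ∃ U : Set P, p ∈ U ∧ q ∉ U ∧
      (∀ a ∈ U, ∀ b, a ≤ b → b ∈ U) ∧
      (∀ A : Set P, A ⊆ U → #A < α → ∀ m, IsGLB A m → m ∈ U) ∧
      (∀ B : Set P, #B < β → ∀ j, IsLUB B j → j ∈ U → ∃ b ∈ B, b ∈ U) := by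
  classical
  have h2ω : (2 : Cardinal.{u}) < ℵ₀ := by exact_mod_cast nat_lt_aleph0 2
  set S : Set (Set P) := {U | p ∈ U ∧ WinAll α β q U} with hSdef
  have hpS : ({p} : Set P) ∈ S :=
    ⟨rfl, fun r s h1 h2 h3 h4 h5 h6 n => H r s h1 h2 h3 h4 h5 h6 n p q hpq⟩
  obtain ⟨U, hpU', hUmax⟩ := zorn_subset_nonempty S (fun c hcS hch hcne =>
    ⟨⋃₀ c, ⟨by
        obtain ⟨V, hV⟩ := hcne
        exact ⟨V, hV, (hcS hV).1⟩,
      fun r s h1 h2 h3 h4 h5 h6 n =>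
        win_chain h1.le h2 hcne hch fun V hV => (hcS hV).2 r s h1 h2 h3 h4 h5 h6 n⟩,
      fun V hV => Set.subset_sUnion_of_mem hV⟩) {p} hpS
  have hWU : WinAll α β q U := hUmax.1.2
  have hpU : p ∈ U := hUmax.1.1
  have key : ∀ x : P, WinAll α β q (insert x U) → x ∈ U := by
    intro x hx
    have hsub : insert x U ⊆ U :=
      hUmax.2 ⟨Set.mem_insert_of_mem _ hpU, hx⟩ (Set.subset_insert x U)
    exact hsub (Set.mem_insert x U)
  have hqU : q ∉ U := hWU 2 2 h2ω h2ω le_rfl hα2 le_rfl hβ2 0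
  refine ⟨U, hpU, hqU, ?_, ?_, ?_⟩
  · -- upward closed
    intro a ha b hab
    refine key b fun r s h1 h2 h3 h4 h5 h6 n => ?_
    exact (win_succ.1 (hWU r s h1 h2 h3 h4 h5 h6 (n+1))).2.1 a ha b hab
  · -- closed under small infima
    intro A hAU hA m hm
    have hAω : #A < ℵ₀ := hA.trans_le hαω
    have hA1 : #A + 1 ≤ α := (Cardinal.add_one_le_succ _).trans (Order.succ_le_of_lt hA)
    have hAlt : #A < #A + 1 := by
      obtain ⟨k, hk⟩ := lt_aleph0.1 hAω
      rw [hk]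
      exact_mod_cast Nat.lt_succ_self k
    refine key m fun r s h1 h2 h3 h4 h5 h6 n => ?_
    have h1' : max r (#A + 1) < ℵ₀ := max_lt h1 (add_lt_aleph0 hAω one_lt_aleph0)
    have hwin := hWU (max r (#A + 1)) s h1' h2 (h3.trans (le_max_left _ _))
      (max_le h4 hA1) h5 h6 (n+1)
    have hres := (win_succ.1 hwin).2.2.1 A hAU (hAlt.trans_le (le_max_right _ _)) m hm
    exact win_mono (le_max_left _ _) le_rfl hres
  · -- prime for small suprema
    intro B hB j hj hjU
    have hBω : #B < ℵ₀ := hB.trans_le hβω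
    have hBfin : B.Finite := lt_aleph0_iff_set_finite.1 hBω
    have hB1 : #B + 1 ≤ β := (Cardinal.add_one_le_succ _).trans (Order.succ_le_of_lt hB)
    have hBlt : #B < #B + 1 := by
      obtain ⟨k, hk⟩ := lt_aleph0.1 hBω
      rw [hk]
      exact_mod_cast Nat.lt_succ_self k
    set Q : P → ℕ → Prop := fun b k =>
      ∀ r s : Cardinal.{u}, r < ℵ₀ → s < ℵ₀ → 2 ≤ r → r ≤ α → 2 ≤ s → s ≤ β →
        r ≤ (k : Cardinal.{u}) → s ≤ (k : Cardinal.{u}) → Win r s k (insert b U) q with hQdef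
    have hstep : ∀ k : ℕ, ∃ b ∈ B, Q b k := by
      intro k
      set r' := max 2 (min (k : Cardinal.{u}) α) with hr'
      set s' := max (max 2 (min (k : Cardinal.{u}) β)) (#B + 1) with hs'
      have hr'1 : r' < ℵ₀ := max_lt h2ω ((min_le_left _ _).trans_lt (nat_lt_aleph0 k))
      have hr'3 : r' ≤ α := max_le hα2 (min_le_right _ _)
      have hs'1 : s' < ℵ₀ := max_lt (max_lt h2ω ((min_le_left _ _).trans_lt (nat_lt_aleph0 k)))
        (add_lt_aleph0 hBω one_lt_aleph0)
      have hs'2 : 2 ≤ s' := (le_max_left _ _).trans (le_max_left _ _)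
      have hs'3 : s' ≤ β := max_le (max_le hβ2 (min_le_right _ _)) hB1
      have hwin := hWU r' s' hr'1 hs'1 (le_max_left _ _) hr'3 hs'2 hs'3 (k+1)
      obtain ⟨b, hbB, hw⟩ :=
        (win_succ.1 hwin).2.2.2 B (hBlt.trans_le (le_max_right _ _)) j hj hjU
      refine ⟨b, hbB, fun r s h1 h2 h3 h4 h5 h6 hrk hsk => ?_⟩
      refine win_mono ?_ ?_ hw
      · exact (le_min hrk h4).trans (le_max_right _ _)
      · exact ((le_min hsk h6).trans (le_max_right _ _)).trans (le_max_left _ _)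
    have hQanti : ∀ b, ∀ k m : ℕ, k ≤ m → Q b m → Q b k := by
      intro b k m hkm hQm r s h1 h2 h3 h4 h5 h6 hrk hsk
      have hcast : (k : Cardinal.{u}) ≤ (m : Cardinal.{u}) := by exact_mod_cast hkm
      exact win_le hkm (hQm r s h1 h2 h3 h4 h5 h6 (hrk.trans hcast) (hsk.trans hcast))
    choose f hfB hfQ using hstep
    haveI : Finite ↥B := hBfin.to_subtype
    obtain ⟨b, hbfib⟩ := Finite.exists_infinite_fiber fun k => (⟨f k, hfB k⟩ : ↥B)
    have hbinf : ((fun k => (⟨f k, hfB k⟩ : ↥B)) ⁻¹' {b}).Infinite :=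
      Set.infinite_coe_iff.1 hbfib
    refine ⟨(b : P), b.2, key (b : P) ?_⟩
    intro r s h1 h2 h3 h4 h5 h6 n
    obtain ⟨r₀, hr₀⟩ := lt_aleph0.1 h1
    obtain ⟨s₀, hs₀⟩ := lt_aleph0.1 h2
    obtain ⟨k, hkfib, hklt⟩ := hbinf.exists_gt (max n (max r₀ s₀))
    have hfk : f k = (b : P) := congrArg Subtype.val hkfib
    have hQbk : Q (b : P) k := hfk ▸ hfQ k
    have hnk : n ≤ k := ((le_max_left _ _).trans hklt.le)
    have hrk : r ≤ (k : Cardinal.{u}) := by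
      rw [hr₀]
      exact_mod_cast ((le_max_left r₀ s₀).trans (le_max_right n _)).trans hklt.le
    have hsk : s ≤ (k : Cardinal.{u}) := by
      rw [hs₀]
      exact_mod_cast ((le_max_right r₀ s₀).trans (le_max_right n _)).trans hklt.le
    exact win_le hnk (hQbk r s h1 h2 h3 h4 h5 h6 hrk hsk)

end AuxWin

theorem representable_iff_win_finite_approx (α β : Cardinal.{u})
    (hα2 : 2 ≤ α) (hαω : α ≤ ℵ₀) (hβ2 : 2 ≤ β) (hβω : β ≤ ℵ₀)
    (P : Type u) [PartialOrder P] :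
    IsABRepresentable α β P ↔
      ∀ r s : Cardinal.{u}, r < ℵ₀ → s < ℵ₀ → 2 ≤ r → r ≤ α → 2 ≤ s → s ≤ β →
        ∀ n : ℕ, ∀ p q : P, ¬p ≤ q → Win r s n {p} q := by
  constructor
  · rintro ⟨X, h, hord, hinf, hsup⟩ r s _ _ _ hrα _ hsβ n p q hpq
    have hns : ¬ h p ⊆ h q := fun hsub => hpq ((hord p q).2 hsub)
    obtain ⟨x, hxp, hxq⟩ := Set.not_subset.1 hns
    refine win_of_separating hord hinf hsup hrα hsβ n {p} q x ?_ hxq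
    rintro u rfl
    exact hxp
  · intro H
    classical
    have hex : ∀ z : {z : P × P // ¬z.1 ≤ z.2}, ∃ U : Set P, z.1.1 ∈ U ∧ z.1.2 ∉ U ∧
        (∀ a ∈ U, ∀ b, a ≤ b → b ∈ U) ∧
        (∀ A : Set P, A ⊆ U → #A < α → ∀ m, IsGLB A m → m ∈ U) ∧
        (∀ B : Set P, #B < β → ∀ j, IsLUB B j → j ∈ U → ∃ b ∈ B, b ∈ U) :=
      fun z => exists_good α β hα2 hαω hβ2 hβω H z.2
    choose F h1 h2 h3 h4 h5 using hex
    refine ⟨{z : P × P // ¬z.1 ≤ z.2}, fun a => {z | a ∈ F z}, ?_, ?_, ?_⟩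
    · intro a b
      constructor
      · intro hab z hz
        exact h3 z a hz b hab
      · intro hsub
        by_contra hab
        exact h2 ⟨(a, b), hab⟩ (hsub (h1 ⟨(a, b), hab⟩))
    · intro S m hS hm
      ext z
      simp only [Set.mem_iInter, Set.mem_setOf_eq]
      constructor
      · intro hmz t ht
        exact h3 z m hmz t (hm.1 ht)
      · intro hall
        exact h4 z S (fun t ht => hall t ht) hS m hm
    · intro T j hT hj
      ext z
      simp only [Set.mem_iUnion, Set.mem_setOf_eq, exists_prop]
      constructor
      · intro hjz
        exact h5 z T hT j hj hjz
      · rintro ⟨t, ht, htz⟩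
        exact h3 z t htz j (hj.1 ht)
end

section
/- A lattice L, regarded as a poset, is (3,3)-representable if and only if L is distributive. -/
open Cardinal

universe u

section Aux

open Order Ideal Set

variable {α : Type*} [DistribLattice α]

private lemma mem_ideal_sup_principal' (a b : α) (J : Order.Ideal α) :
    b ∈ J ⊔ Order.Ideal.principal a ↔ ∃ j ∈ J, b ≤ j ⊔ a :=
  ⟨fun ⟨j, ⟨jJ, _, ha', bja'⟩⟩ => ⟨j, jJ, le_trans bja' (sup_le_sup_left ha' j)⟩,
    fun ⟨j, hj, hbja⟩ => ⟨j, hj, a, le_refl a, hbja⟩⟩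

/-- Prime ideal separation in a (possibly unbounded) distributive lattice. -/
private theorem prime_ideal_separates {F : Order.PFilter α} {I : Order.Ideal α}
    (hFI : Disjoint (F : Set α) (I : Set α)) :
    ∃ J : Order.Ideal α, (IsPrime J) ∧ I ≤ J ∧ Disjoint (F : Set α) J := by
  set S : Set (Set α) := { J : Set α | IsIdeal J ∧ I ≤ J ∧ Disjoint (F : Set α) J }
  have IinS : ↑I ∈ S := by
    refine ⟨Order.Ideal.isIdeal I, by trivial⟩
  have chainub : ∀ c ⊆ S, IsChain (· ⊆ ·) c → c.Nonempty → ∃ ub ∈ S, ∀ s ∈ c, s ⊆ ub := by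
    intros c hcS hcC hcNe
    use sUnion c
    refine ⟨?_, fun s hs ↦ le_sSup hs⟩
    simp only [le_eq_subset, mem_setOf_eq, disjoint_sUnion_right, S]
    let ⟨J, hJ⟩ := hcNe
    refine ⟨Order.isIdeal_sUnion_of_isChain (fun _ hJ ↦ (hcS hJ).1) hcC hcNe,
            ⟨le_trans (hcS hJ).2.1 (le_sSup hJ), fun J hJ ↦ (hcS hJ).2.2⟩⟩
  obtain ⟨Jset, _, hmax⟩ := zorn_subset_nonempty S chainub I IinS
  obtain ⟨Jidl, IJ, JF⟩ := hmax.prop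
  set J := IsIdeal.toIdeal Jidl
  use J
  have IJ' : I ≤ J := IJ
  clear chainub IinS
  refine ⟨?_, ⟨IJ, JF⟩⟩
  obtain ⟨f, hf⟩ := F.nonempty
  have Jpr : IsProper J := isProper_of_notMem (Set.disjoint_left.1 JF hf)
  rw [isPrime_iff_mem_or_mem]
  intros a₁ a₂
  contrapose!
  intro ⟨ha₁, ha₂⟩
  let J₁ := J ⊔ Order.Ideal.principal a₁
  let J₂ := J ⊔ Order.Ideal.principal a₂
  have a₁J₁ : a₁ ∈ J₁ := mem_of_subset_of_mem (le_sup_right : _ ≤ J ⊔ _) mem_principal_self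
  have a₂J₂ : a₂ ∈ J₂ := mem_of_subset_of_mem (le_sup_right : _ ≤ J ⊔ _) mem_principal_self
  have J₁J : ↑J₁ ≠ Jset := ne_of_mem_of_not_mem' a₁J₁ ha₁
  have J₂J : ↑J₂ ≠ Jset := ne_of_mem_of_not_mem' a₂J₂ ha₂
  have J₁S : ↑J₁ ∉ S := fun h => J₁J (hmax.eq_of_le h (le_sup_left : J ≤ J₁)).symm
  have J₂S : ↑J₂ ∉ S := fun h => J₂J (hmax.eq_of_le h (le_sup_left : J ≤ J₂)).symm
  have J₁F : ¬ (Disjoint (F : Set α) J₁) := by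
    intro hdis
    apply J₁S
    simp only [le_eq_subset, mem_setOf_eq, SetLike.coe_subset_coe, S]
    exact ⟨J₁.isIdeal, le_trans IJ' le_sup_left, hdis⟩
  have J₂F : ¬ (Disjoint (F : Set α) J₂) := by
    intro hdis
    apply J₂S
    simp only [le_eq_subset, mem_setOf_eq, SetLike.coe_subset_coe, S]
    exact ⟨J₂.isIdeal, le_trans IJ' le_sup_left, hdis⟩
  let ⟨c₁, ⟨c₁F, c₁J₁⟩⟩ := Set.not_disjoint_iff.1 J₁F
  let ⟨c₂, ⟨c₂F, c₂J₂⟩⟩ := Set.not_disjoint_iff.1 J₂F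
  let ⟨b₁, ⟨b₁J, cba₁⟩⟩ := (mem_ideal_sup_principal' a₁ c₁ J).1 c₁J₁
  let ⟨b₂, ⟨b₂J, cba₂⟩⟩ := (mem_ideal_sup_principal' a₂ c₂ J).1 c₂J₂
  let b := b₁ ⊔ b₂
  have bJ : b ∈ J := sup_mem b₁J b₂J
  have ineq : c₁ ⊓ c₂ ≤ b ⊔ (a₁ ⊓ a₂) :=
  calc
    c₁ ⊓ c₂ ≤ (b₁ ⊔ a₁) ⊓ (b₂ ⊔ a₂) := inf_le_inf cba₁ cba₂
    _       ≤ (b  ⊔ a₁) ⊓ (b  ⊔ a₂) := by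
      apply inf_le_inf <;> apply sup_le_sup_right; exact le_sup_left; exact le_sup_right
    _       = b ⊔ (a₁ ⊓ a₂) := (sup_inf_left b a₁ a₂).symm
  have ba₁a₂F : b ⊔ (a₁ ⊓ a₂) ∈ F := PFilter.mem_of_le ineq (PFilter.inf_mem c₁F c₂F)
  contrapose! JF with ha₁a₂
  rw [Set.not_disjoint_iff]
  use b ⊔ (a₁ ⊓ a₂)
  exact ⟨ba₁a₂F, sup_mem bJ ha₁a₂⟩

/-- Separate two elements by a prime ideal. -/
private theorem exists_prime_ideal_sep {p q : α} (hpq : ¬ p ≤ q) :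
    ∃ J : Order.Ideal α, (IsPrime J) ∧ q ∈ J ∧ p ∉ J := by
  have hdis : Disjoint ((Order.PFilter.principal p : Order.PFilter α) : Set α)
      ((Order.Ideal.principal q : Order.Ideal α) : Set α) := by
    rw [Set.disjoint_left]
    intro x hx hx'
    exact hpq (le_trans (Order.PFilter.mem_principal.mp hx) (by exact hx'))
  obtain ⟨J, hJ, hIJ, hdisJ⟩ := prime_ideal_separates hdis
  refine ⟨J, hJ, hIJ (Order.Ideal.mem_principal.mpr le_rfl), ?_⟩
  exact Set.disjoint_left.1 hdisJ (Order.PFilter.mem_principal.mpr le_rfl)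

end Aux

private lemma small3 {α : Type u} (S : Set α) (hS : #S < 3) :
    S = ∅ ∨ ∃ a b, S = {a, b} := by
  rcases S.eq_empty_or_nonempty with rfl | ⟨a, ha⟩
  · exact Or.inl rfl
  right
  by_cases hsub : S ⊆ {a}
  · refine ⟨a, a, ?_⟩
    rw [Set.pair_eq_singleton]
    exact le_antisymm hsub (Set.singleton_subset_iff.mpr ha)
  obtain ⟨b, hb, hba⟩ := Set.not_subset.mp hsub
  rw [Set.mem_singleton_iff] at hba
  refine ⟨a, b, Set.Subset.antisymm ?_ ?_⟩
  · intro c hc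
    by_contra hcab
    simp only [Set.mem_insert_iff, Set.mem_singleton_iff, not_or] at hcab
    obtain ⟨hca, hcb⟩ := hcab
    have hsub3 : ({a, b, c} : Set α) ⊆ S := by
      intro x hx
      simp only [Set.mem_insert_iff, Set.mem_singleton_iff] at hx
      rcases hx with rfl | rfl | rfl
      exacts [ha, hb, hc]
    have h3 : #({a, b, c} : Set α) = 3 := by
      rw [Cardinal.mk_insert (by simp [Ne.symm hba, Ne.symm hca]),
        Cardinal.mk_insert (by simp [Ne.symm hcb]), Cardinal.mk_singleton]
      norm_num
    have hle := Cardinal.mk_le_mk_of_subset hsub3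
    rw [h3] at hle
    exact absurd hS (not_lt.mpr hle)
  · intro x hx
    simp only [Set.mem_insert_iff, Set.mem_singleton_iff] at hx
    rcases hx with rfl | rfl
    exacts [ha, hb]

private lemma pair_lt_three {α : Type u} (a b : α) : #({a, b} : Set α) < 3 := by
  have h1 : #({a, b} : Set α) ≤ #({b} : Set α) + 1 := Cardinal.mk_insert_le
  rw [Cardinal.mk_singleton] at h1
  exact h1.trans_lt (by norm_num)

theorem lattice_representable33_iff_distributive (L : Type u) [Lattice L] :
    IsABRepresentable 3 3 L ↔ ∀ x y z : L, x ⊓ (y ⊔ z) = (x ⊓ y) ⊔ (x ⊓ z) := by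
  constructor
  · rintro ⟨X, h, hord, hinf, hsup⟩ x y z
    have hm : ∀ a b : L, h (a ⊓ b) = h a ∩ h b := fun a b => by
      rw [hinf {a, b} (a ⊓ b) (pair_lt_three a b) isGLB_pair, Set.biInter_pair]
    have hj : ∀ a b : L, h (a ⊔ b) = h a ∪ h b := fun a b => by
      rw [hsup {a, b} (a ⊔ b) (pair_lt_three a b) isLUB_pair, Set.biUnion_pair]
    have hinj : ∀ a b : L, h a = h b → a = b := fun a b hab =>
      le_antisymm ((hord a b).2 hab.le) ((hord b a).2 hab.ge)
    apply hinj
    rw [hm, hj, hj, hm, hm, Set.inter_union_distrib_left]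
  · intro hd
    letI : DistribLattice L := DistribLattice.ofInfSupLe fun a b c => (hd a b c).le
    refine ⟨{I : Order.Ideal L // I.IsPrime}, fun p => {I | p ∉ I.1}, ?_, ?_, ?_⟩
    · intro p q
      constructor
      · intro hpq I hI hq
        exact hI (I.1.lower hpq hq)
      · intro hsub
        by_contra hpq
        obtain ⟨J, hJ, hqJ, hpJ⟩ := exists_prime_ideal_sep hpq
        exact (hsub (show (⟨J, hJ⟩ : {I : Order.Ideal L // I.IsPrime}) ∈ _ from hpJ)) hqJ
    · intro S m hS hglb
      rcases small3 S hS with rfl | ⟨a, b, rfl⟩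
      · rw [Set.biInter_empty]
        ext I
        simp only [Set.mem_setOf_eq, Set.mem_univ, iff_true]
        intro hm
        have htop : ∀ x : L, x ≤ m := fun x => hglb.2 (by simp [lowerBounds])
        have : (I.1 : Set L) = Set.univ :=
          Set.eq_univ_of_forall fun x => I.1.lower (htop x) hm
        exact (I.1.isProper_iff.mp I.2.toIsProper) this
      · have hm : m = a ⊓ b := hglb.unique isGLB_pair
        subst hm
        rw [Set.biInter_pair]
        ext I
        simp only [Set.mem_setOf_eq, Set.mem_inter_iff]
        constructor
        · intro hab
          exact ⟨fun ha => hab (I.1.lower inf_le_left ha),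
                 fun hb => hab (I.1.lower inf_le_right hb)⟩
        · rintro ⟨ha, hb⟩ hab
          rcases I.2.mem_or_mem hab with h | h
          exacts [ha h, hb h]
    · intro T j hT hlub
      rcases small3 T hT with rfl | ⟨a, b, rfl⟩
      · rw [Set.biUnion_empty]
        ext I
        simp only [Set.mem_setOf_eq, Set.mem_empty_iff_false, iff_false, not_not]
        obtain ⟨x, hx⟩ := I.1.nonempty
        have hbot : j ≤ x := hlub.2 (by simp [upperBounds])
        exact I.1.lower hbot hx
      · have hj : j = a ⊔ b := hlub.unique isLUB_pair
        subst hj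
        rw [Set.biUnion_pair]
        ext I
        simp only [Set.mem_setOf_eq, Set.mem_union]
        constructor
        · intro hab
          by_contra hc
          push_neg at hc
          obtain ⟨ha, hb⟩ := hc
          exact hab (Order.Ideal.sup_mem ha hb)
        · rintro (ha | hb) hab
          exacts [ha (I.1.lower le_sup_left hab), hb (I.1.lower le_sup_right hab)]
end
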